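/- Let A be a commutative ring with a finite multi-center {[M_i, a_i]}_{i=1,…,k}, let S be the submonoid of A generated by a_1, …, a_k, and λ : A → S⁻¹A the localization map. Then, as sub-A-algebras of S⁻¹A, the dilatation A[{M_i/a_i}_{i=1,…,k}] (generated by the fractions λ(m)·λ(a_i)⁻¹ for m ∈ M_i) equals the mono-centered dilatation A[N/(a_1⋯a_k)], i.e. the sub-A-algebra generated by the fractions λ(n)·λ(a_1⋯a_k)⁻¹ for n in the ideal N = Σ_{i=1}^{k} M_i · ∏_{j≠i} (a_j). -/

import Mathlib

/-- The multi-centered dilatation `A[{M_i/a_i}]` of a commutative ring `A` with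
multi-center `{[M_i, a_i]}_{i ∈ I}`, realized as the sub-`A`-algebra of `S⁻¹A`
(where `S` is the multiplicative submonoid generated by the `a_i`) generated by
the fractions `λ(m)·λ(a_i)⁻¹` for `i ∈ I` and `m ∈ M_i`. -/
noncomputable def dilatation {A : Type*} [CommRing A] {I : Type*} (M : I → Ideal A) (a : I → A) :
    Subalgebra A (Localization (Submonoid.closure (Set.range a))) :=
  Algebra.adjoin A {x | ∃ i, ∃ m ∈ M i,
    x = algebraMap A (Localization (Submonoid.closure (Set.range a))) m *
        Ring.inverse (algebraMap A (Localization (Submonoid.closure (Set.range a))) (a i))}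

/-- For a finite multi-center `{[M_i,a_i]}_{i=1,…,k}`, the multi-centered dilatation
`A[{M_i/a_i}]` equals the mono-centered dilatation `A[N/(a_1⋯a_k)]` where
`N = Σ_i M_i · ∏_{j ≠ i} (a_j)`, both regarded as sub-`A`-algebras of `S⁻¹A`. -/
theorem dilatation_finite_eq_monocentered {A : Type*} [CommRing A] {k : ℕ}
    (M : Fin k → Ideal A) (a : Fin k → A) :
    dilatation M a =
      Algebra.adjoin A {x : Localization (Submonoid.closure (Set.range a)) |
        ∃ n ∈ (∑ i, M i * ∏ j ∈ Finset.univ.erase i, Ideal.span {a j}),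
          x = algebraMap A (Localization (Submonoid.closure (Set.range a))) n *
              Ring.inverse (algebraMap A (Localization (Submonoid.closure (Set.range a)))
                (∏ j, a j))} := by
  set S := Submonoid.closure (Set.range a) with hS
  set L := Localization S with hL
  set f : A →+* L := algebraMap A L with hf
  have haS : ∀ i, a i ∈ S := fun i => Submonoid.subset_closure (Set.mem_range_self i)
  have hu : ∀ s ∈ S, IsUnit (f s) := fun s hs =>
    IsLocalization.map_units (M := S) L ⟨s, hs⟩
  have hua : ∀ i, IsUnit (f (a i)) := fun i => hu _ (haS i)
  have huprod : ∀ (t : Finset (Fin k)), IsUnit (f (∏ j ∈ t, a j)) := fun t =>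
    hu _ (Submonoid.prod_mem S (fun j _ => haS j))
  -- key algebraic identity
  have key : ∀ i : Fin k, ∀ m : A,
      f (m * ∏ j ∈ Finset.univ.erase i, a j) * Ring.inverse (f (∏ j, a j)) =
      f m * Ring.inverse (f (a i)) := by
    intro i m
    have hprod : (∏ j, a j) = a i * ∏ j ∈ Finset.univ.erase i, a j :=
      (Finset.mul_prod_erase Finset.univ a (Finset.mem_univ i)).symm
    rw [hprod, map_mul, map_mul, Ring.mul_inverse_rev]
    have h2 := huprod (Finset.univ.erase i)
    rw [show f m * f (∏ j ∈ Finset.univ.erase i, a j) *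
        (Ring.inverse (f (∏ j ∈ Finset.univ.erase i, a j)) * Ring.inverse (f (a i))) =
        f m * (f (∏ j ∈ Finset.univ.erase i, a j) *
          Ring.inverse (f (∏ j ∈ Finset.univ.erase i, a j))) * Ring.inverse (f (a i)) by ring,
      Ring.mul_inverse_cancel _ h2, mul_one]
  apply le_antisymm
  · apply Algebra.adjoin_le
    rintro x ⟨i, m, hm, rfl⟩
    apply Algebra.subset_adjoin
    refine ⟨m * ∏ j ∈ Finset.univ.erase i, a j, ?_, (key i m).symm⟩
    rw [Ideal.sum_eq_sup]
    have hsup : M i * ∏ j ∈ Finset.univ.erase i, Ideal.span {a j} ≤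
        Finset.univ.sup (fun i => M i * ∏ j ∈ Finset.univ.erase i, Ideal.span {a j}) :=
      Finset.le_sup (f := fun i => M i * ∏ j ∈ Finset.univ.erase i, Ideal.span {a j})
        (Finset.mem_univ i)
    refine hsup ?_
    exact Ideal.mul_mem_mul hm (Ideal.prod_mem_prod fun j _ => Ideal.subset_span rfl)
  · apply Algebra.adjoin_le
    rintro x ⟨n, hn, rfl⟩
    -- the set of n such that f n * inverse (f ∏ a) ∈ dilatation M a is an ideal
    set c : L := Ring.inverse (f (∏ j, a j)) with hc
    set g : A →ₗ[A] L := c • (Algebra.linearMap A L) with hg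
    have hgapp : ∀ n : A, g n = f n * c := fun n => by
      simp [hg, Algebra.linearMap_apply, smul_eq_mul, mul_comm]; rfl
    set T : Ideal A := Submodule.comap g (Subalgebra.toSubmodule (dilatation M a)) with hT
    have hle : (∑ i, M i * ∏ j ∈ Finset.univ.erase i, Ideal.span {a j}) ≤ T := by
      rw [Ideal.sum_eq_sup, Finset.sup_le_iff]
      intro i _
      rw [Ideal.prod_span_singleton, Ideal.mul_le]
      intro m hm r hr
      rw [Ideal.mem_span_singleton] at hr
      obtain ⟨d, rfl⟩ := hr
      simp only [hT, Submodule.mem_comap, Subalgebra.mem_toSubmodule, hgapp]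
      have : f (m * ((∏ j ∈ Finset.univ.erase i, a j) * d)) * c =
          f d * (f m * Ring.inverse (f (a i))) := by
        rw [← key i m]
        push_cast [map_mul]
        ring
      rw [this]
      exact Subalgebra.mul_mem _ (Subalgebra.algebraMap_mem _ d)
        (Algebra.subset_adjoin ⟨i, m, hm, rfl⟩)
    have := hle hn
    simpa only [hT, Submodule.mem_comap, Subalgebra.mem_toSubmodule, hgapp, SetLike.mem_coe] using this
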